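/- Fix a real R with 0 < R < 1, and for each integer b ≥ 1 let m(b) be the unique positive real with P(b, m(b)) = R, where P(b, m) = (1/(b−1)!) ∫₀^m t^{b−1} e^{−t} dt. Then for every integer s ≥ 1, the minimum of m(b)/b over integers b with 1 ≤ b ≤ s is attained at b = 1 or at b = s; that is, min_{1 ≤ b ≤ s} m(b)/b = min(m(1), m(s)/s). -/

import Mathlib

open Real MeasureTheory intervalIntegral

/-- The regularized lower incomplete gamma function
`P (b, m) = (1/(b-1)!) ∫₀^m t^(b-1) e^(-t) dt` for integer shape `b ≥ 1`. -/
noncomputable def regIncGamma (b : ℕ) (m : ℝ) : ℝ :=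
  (1 / (Nat.factorial (b - 1) : ℝ)) * ∫ t in (0:ℝ)..m, t ^ (b - 1) * Real.exp (-t)

noncomputable def Jfun (α : ℝ) (n : ℕ) : ℝ :=
  ∫ u in (0:ℝ)..α, (1 + u / (α * n)) ^ n * Real.exp (-u)

lemma contf (k : ℕ) : Continuous (fun t : ℝ => t ^ k * Real.exp (-t)) := by continuity

lemma reg_succ (k : ℕ) (m : ℝ) :
    regIncGamma (k+1) m = (1 / (Nat.factorial k : ℝ)) * ∫ t in (0:ℝ)..m, t ^ k * Real.exp (-t) := by
  simp [regIncGamma]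

lemma int_rec (k : ℕ) (m : ℝ) :
    (∫ t in (0:ℝ)..m, t ^ (k+1) * Real.exp (-t))
      = -(m ^ (k+1) * Real.exp (-m)) + (k+1) * ∫ t in (0:ℝ)..m, t ^ k * Real.exp (-t) := by
  have hu' : Continuous (fun t : ℝ => ((k:ℝ)+1) * t ^ k) := by continuity
  have hv' : Continuous (fun t : ℝ => Real.exp (-t)) := by continuity
  have h := intervalIntegral.integral_mul_deriv_eq_deriv_mul
    (u := fun t : ℝ => t ^ (k+1)) (u' := fun t : ℝ => ((k:ℝ)+1) * t ^ k)
    (v := fun t : ℝ => -Real.exp (-t)) (v' := fun t : ℝ => Real.exp (-t))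
    (a := (0:ℝ)) (b := m)
    (fun x _ => by simpa using (hasDerivAt_pow (k+1) x))
    (fun x _ => by
      have : HasDerivAt (fun t : ℝ => Real.exp (-t)) (-Real.exp (-x)) x := by
        simpa [Function.comp_def] using ((Real.hasDerivAt_exp (-x)).comp x ((hasDerivAt_id x).neg))
      simpa [Pi.neg_def] using this.neg)
    (hu'.intervalIntegrable 0 m)
    (hv'.intervalIntegrable 0 m)
  simp only [zero_pow, Nat.succ_ne_zero, ne_eq, Nat.add_one_ne_zero, not_false_eq_true] at h
  rw [h]
  have : (∫ x in (0:ℝ)..m, ((k:ℝ)+1) * x ^ k * -Real.exp (-x))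
      = -(((k:ℝ)+1) * ∫ t in (0:ℝ)..m, t ^ k * Real.exp (-t)) := by
    rw [← intervalIntegral.integral_const_mul, ← intervalIntegral.integral_neg]
    congr 1; ext t; ring
  rw [this]; ring

lemma reg_rec (n : ℕ) (hn : 1 ≤ n) (m : ℝ) :
    regIncGamma n m = regIncGamma (n+1) m + m^n * Real.exp (-m) / (Nat.factorial n : ℝ) := by
  obtain ⟨k, rfl⟩ := Nat.exists_eq_add_of_le hn
  rw [show 1 + k = k + 1 by ring, show k+1+1 = (k+1)+1 from rfl,
    reg_succ (k+1) m, reg_succ k m, int_rec]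
  have h1 : (Nat.factorial (k+1) : ℝ) = (k+1) * Nat.factorial k := by
    push_cast [Nat.factorial_succ]; ring
  have h2 : (Nat.factorial k : ℝ) ≠ 0 := Nat.cast_ne_zero.mpr (Nat.factorial_ne_zero k)
  field_simp [h1]
  push_cast [Nat.factorial_succ]; ring

lemma int_strict_mono (k : ℕ) {a b : ℝ} (ha : 0 ≤ a) (hab : a < b) :
    (∫ t in (0:ℝ)..a, t ^ k * Real.exp (-t)) < ∫ t in (0:ℝ)..b, t ^ k * Real.exp (-t) := by
  have hint : ∀ u v : ℝ, IntervalIntegrable (fun t : ℝ => t ^ k * Real.exp (-t)) volume u v :=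
    fun u v => (contf k).intervalIntegrable u v
  have hsplit : (∫ t in (0:ℝ)..b, t ^ k * Real.exp (-t))
      = (∫ t in (0:ℝ)..a, t ^ k * Real.exp (-t)) + ∫ t in a..b, t ^ k * Real.exp (-t) :=
    (intervalIntegral.integral_add_adjacent_intervals (hint 0 a) (hint a b)).symm
  have hpos : 0 < ∫ t in a..b, t ^ k * Real.exp (-t) := by
    apply intervalIntegral.intervalIntegral_pos_of_pos_on (hint a b)
    · intro x hx
      have hx0 : 0 < x := lt_of_le_of_lt ha hx.1
      positivity
    · exact hab
  linarith

lemma reg_mono (n : ℕ) (hn : 1 ≤ n) {a b : ℝ} (ha : 0 ≤ a) (hab : a < b) :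
    regIncGamma n a < regIncGamma n b := by
  obtain ⟨k, rfl⟩ := Nat.exists_eq_add_of_le hn
  rw [show 1 + k = k + 1 by ring, reg_succ k a, reg_succ k b]
  have h2 : (0:ℝ) < (Nat.factorial k : ℝ) := by
    exact_mod_cast Nat.factorial_pos k
  have := int_strict_mono k ha hab
  have hfac : (0:ℝ) < 1 / (Nat.factorial k : ℝ) := by positivity
  exact (mul_lt_mul_iff_right₀ hfac).mpr this

lemma reg_mono_le (n : ℕ) (hn : 1 ≤ n) {a b : ℝ} (ha : 0 ≤ a) (hab : a ≤ b) :
    regIncGamma n a ≤ regIncGamma n b := by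
  rcases eq_or_lt_of_le hab with h | h
  · rw [h]
  · exact (reg_mono n hn ha h).le

lemma pow_one_add_div_mono (n : ℕ) (hn : 1 ≤ n) {x : ℝ} (hx : 0 ≤ x) :
    (1 + x / n) ^ n ≤ (1 + x / (n+1 : ℕ)) ^ (n+1) := by
  have hn0 : (0:ℝ) < n := by exact_mod_cast hn
  have hn1 : (0:ℝ) < (n:ℝ) + 1 := by linarith
  set z : ℝ := x / n with hz
  set y : ℝ := x / ((n:ℝ)+1) with hy
  have hz0 : 0 ≤ z := div_nonneg hx hn0.le
  have hy0 : 0 ≤ y := div_nonneg hx hn1.le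
  have h1z : (0:ℝ) < 1 + z := by linarith
  have h1y : (0:ℝ) < 1 + y := by linarith
  set a : ℝ := (1 + y) / (1 + z) - 1 with ha
  have ha2 : (-2:ℝ) ≤ a := by
    have : 0 < (1 + y) / (1 + z) := div_pos h1y h1z
    simp only [ha]; linarith
  have hbern := one_add_mul_le_pow ha2 (n+1)
  have hkey : 1 + ((n:ℝ)+1) * a = 1 / (1 + z) := by
    simp only [ha, hz, hy]
    field_simp
    ring
  have hpow : (1:ℝ) / (1 + z) ≤ ((1 + y) / (1 + z)) ^ (n+1) := by
    calc (1:ℝ) / (1+z) = 1 + ((n:ℝ)+1) * a := hkey.symm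
    _ = 1 + ((n+1 : ℕ):ℝ) * a := by push_cast; ring
    _ ≤ (1 + a) ^ (n+1) := hbern
    _ = ((1 + y) / (1 + z)) ^ (n+1) := by rw [ha]; ring_nf
  have hmul := mul_le_mul_of_nonneg_right hpow (le_of_lt (pow_pos h1z (n+1)))
  have hL : (1:ℝ) / (1 + z) * (1 + z)^(n+1) = (1+z)^n := by
    rw [pow_succ]; field_simp
  have hR : ((1 + y) / (1 + z)) ^ (n+1) * (1 + z)^(n+1) = (1+y)^(n+1) := by
    rw [div_pow]; field_simp
  rw [hL, hR] at hmul
  have : ((n:ℝ)+1) = ((n+1 : ℕ):ℝ) := by push_cast; ring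
  rw [hy, this] at hmul
  exact hmul

lemma contJ (α : ℝ) (n : ℕ) :
    Continuous (fun u : ℝ => (1 + u / (α * n)) ^ n * Real.exp (-u)) := by continuity

lemma J_mono (α : ℝ) (hα : 0 < α) (n : ℕ) (hn : 1 ≤ n) :
    Jfun α n ≤ Jfun α (n+1) := by
  unfold Jfun
  apply intervalIntegral.integral_mono_on hα.le
    ((contJ α n).intervalIntegrable 0 α) ((contJ α (n+1)).intervalIntegrable 0 α)
  intro u hu
  have hu0 : 0 ≤ u := hu.1
  have hx : 0 ≤ u / α := div_nonneg hu0 hα.le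
  have h := pow_one_add_div_mono n hn hx
  have e1 : u / α / (n:ℝ) = u / (α * n) := by rw [div_div]
  have e2 : u / α / ((n+1:ℕ):ℝ) = u / (α * ((n+1:ℕ):ℝ)) := by rw [div_div]
  rw [e1, e2] at h
  exact mul_le_mul_of_nonneg_right h (Real.exp_nonneg _)

lemma shift_factor (α : ℝ) (hα : 0 < α) (n : ℕ) (hn : 1 ≤ n) :
    (∫ t in (α*n)..(α*n+α), t ^ n * Real.exp (-t))
      = (α*n)^n * Real.exp (-(α*n)) * Jfun α n := by
  have hc : (α * n) ≠ 0 := by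
    have : (0:ℝ) < n := by exact_mod_cast hn
    positivity
  have h1 : (∫ u in (0:ℝ)..α, (u + α*n) ^ n * Real.exp (-(u + α*n)))
      = ∫ t in (0 + α*n)..(α + α*n), t ^ n * Real.exp (-t) :=
    intervalIntegral.integral_comp_add_right (fun t => t ^ n * Real.exp (-t)) (α*n)
  have h2 : (∫ u in (0:ℝ)..α, (u + α*n) ^ n * Real.exp (-(u + α*n)))
      = (α*n)^n * Real.exp (-(α*n)) * Jfun α n := by
    rw [Jfun, ← intervalIntegral.integral_const_mul]
    congr 1
    ext u
    have : u + α*n = (α*n) * (1 + u / (α*n)) := by field_simp; ring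
    rw [this, mul_pow, show -((α*n) * (1 + u / (α*n))) = -(α*n) + -u by field_simp; ring,
      Real.exp_add]
    ring
  rw [← h2, h1]
  congr 1 <;> ring

lemma D_eq (α : ℝ) (hα : 0 < α) (n : ℕ) (hn : 1 ≤ n) :
    regIncGamma (n+1) (α*((n+1:ℕ):ℝ)) - regIncGamma n (α*n)
      = (α*n)^n * Real.exp (-(α*n)) / (Nat.factorial n : ℝ) * (Jfun α n - 1) := by
  have hrec := reg_rec n hn (α*n)
  have hdiff : regIncGamma (n+1) (α*((n+1:ℕ):ℝ)) - regIncGamma (n+1) (α*n)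
      = (1 / (Nat.factorial n : ℝ)) * ((α*n)^n * Real.exp (-(α*n)) * Jfun α n) := by
    rw [reg_succ n (α*((n+1:ℕ):ℝ)), reg_succ n (α*n), ← mul_sub]
    congr 1
    have hsplit := intervalIntegral.integral_add_adjacent_intervals
      ((contf n).intervalIntegrable (μ := volume) 0 (α*n))
      ((contf n).intervalIntegrable (μ := volume) (α*n) (α*n+α))
    have he : α*((n+1:ℕ):ℝ) = α*n + α := by push_cast; ring
    rw [he, ← hsplit, ← shift_factor α hα n hn]
    ring
  have hfac : (Nat.factorial n : ℝ) ≠ 0 := Nat.cast_ne_zero.mpr (Nat.factorial_ne_zero n)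
  have : regIncGamma (n+1) (α*((n+1:ℕ):ℝ)) - regIncGamma n (α*n)
      = (1 / (Nat.factorial n : ℝ)) * ((α*n)^n * Real.exp (-(α*n)) * Jfun α n)
        - (α*n)^n * Real.exp (-(α*n)) / (Nat.factorial n : ℝ) := by
    rw [hrec]; linarith [hdiff]
  rw [this]; field_simp

lemma D_step (α : ℝ) (hα : 0 < α) (n : ℕ) (hn : 1 ≤ n)
    (h : 0 < regIncGamma (n+1) (α*((n+1:ℕ):ℝ)) - regIncGamma n (α*n)) :
    0 < regIncGamma (n+2) (α*((n+2:ℕ):ℝ)) - regIncGamma (n+1) (α*((n+1:ℕ):ℝ)) := by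
  have hn' : (0:ℝ) < n := by exact_mod_cast hn
  have hC : 0 < (α*n)^n * Real.exp (-(α*n)) / (Nat.factorial n : ℝ) := by
    have : (0:ℝ) < (Nat.factorial n : ℝ) := by exact_mod_cast Nat.factorial_pos n
    positivity
  have hJ1 : 1 < Jfun α n := by
    rw [D_eq α hα n hn] at h
    nlinarith
  have hJ2 : 1 < Jfun α (n+1) := lt_of_lt_of_le hJ1 (J_mono α hα n hn)
  have hC2 : 0 < (α*(n+1:ℕ))^(n+1) * Real.exp (-(α*((n+1:ℕ):ℝ))) / (Nat.factorial (n+1) : ℝ) := by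
    have h1 : (0:ℝ) < ((n+1:ℕ):ℝ) := by exact_mod_cast Nat.succ_pos n
    have h2 : (0:ℝ) < (Nat.factorial (n+1) : ℝ) := by exact_mod_cast Nat.factorial_pos (n+1)
    positivity
  have := D_eq α hα (n+1) (by omega)
  rw [show (n+1)+1 = n+2 from rfl] at this
  rw [this]
  nlinarith

/-- key step: once the sequence m b / b strictly decreases, it keeps decreasing -/
lemma m_step (R : ℝ) (m : ℕ → ℝ)
    (hm : ∀ b : ℕ, 1 ≤ b → 0 < m b ∧ regIncGamma b (m b) = R)
    (n : ℕ) (hn : 1 ≤ n)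
    (hdec : m (n+1) / ((n+1:ℕ):ℝ) < m n / (n:ℝ)) :
    m (n+2) / ((n+2:ℕ):ℝ) < m (n+1) / ((n+1:ℕ):ℝ) := by
  set α : ℝ := m (n+1) / ((n+1:ℕ):ℝ) with hαdef
  have hn0 : (0:ℝ) < n := by exact_mod_cast hn
  have hn1 : (0:ℝ) < ((n+1:ℕ):ℝ) := by exact_mod_cast Nat.succ_pos n
  have hn2 : (0:ℝ) < ((n+2:ℕ):ℝ) := by positivity
  have hm1 := hm (n+1) (by omega)
  have hmn := hm n hn
  have hm2 := hm (n+2) (by omega)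
  have hα : 0 < α := div_pos hm1.1 hn1
  have hα1 : α * ((n+1:ℕ):ℝ) = m (n+1) := by
    rw [hαdef]; field_simp
  -- α * n < m n
  have hαn : α * n < m n := by
    have := (div_lt_div_iff₀ hn1 hn0).mp hdec
    calc α * n = m (n+1) * n / ((n+1:ℕ):ℝ) := by rw [hαdef]; ring
    _ < m n := by rw [div_lt_iff₀ hn1]; linarith [this]
  have hD : 0 < regIncGamma (n+1) (α*((n+1:ℕ):ℝ)) - regIncGamma n (α*n) := by
    have h1 : regIncGamma (n+1) (α*((n+1:ℕ):ℝ)) = R := by rw [hα1]; exact hm1.2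
    have h2 : regIncGamma n (α*n) < R := by
      have := reg_mono n hn (a := α*n) (b := m n) (by positivity) hαn
      rw [hmn.2] at this; exact this
    linarith
  have hD2 := D_step α hα n hn hD
  have h1 : regIncGamma (n+1) (α*((n+1:ℕ):ℝ)) = R := by rw [hα1]; exact hm1.2
  have h3 : R < regIncGamma (n+2) (α*((n+2:ℕ):ℝ)) := by
    rw [← h1]; linarith
  -- conclude m (n+2) < α * (n+2)
  have h4 : m (n+2) < α * ((n+2:ℕ):ℝ) := by
    by_contra hcon
    push_neg at hcon
    have := reg_mono_le (n+2) (by omega) (a := α*((n+2:ℕ):ℝ)) (b := m (n+2)) (by positivity) hcon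
    rw [hm2.2] at this
    linarith
  rw [hαdef] at h4 ⊢
  rw [div_lt_div_iff₀ hn2 hn1]
  calc m (n+2) * ((n+1:ℕ):ℝ) < (m (n+1) / ((n+1:ℕ):ℝ) * ((n+2:ℕ):ℝ)) * ((n+1:ℕ):ℝ) := by
        exact mul_lt_mul_of_pos_right h4 hn1
  _ = m (n+1) * ((n+2:ℕ):ℝ) := by field_simp

section Combinatorial

variable (f : ℕ → ℝ)

lemma desc_prop (hstep : ∀ n, 1 ≤ n → f (n+1) < f n → f (n+2) < f (n+1))
    (c : ℕ) (hc : 1 ≤ c) (hdesc : f (c+1) < f c) :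
    ∀ j, c ≤ j → f (j+1) < f j := by
  intro j hj
  induction j, hj using Nat.le_induction with
  | base => exact hdesc
  | succ j hj ih => exact hstep j (le_trans hc hj) ih

lemma chain_dec (b s : ℕ) (hbs : b ≤ s) (h : ∀ j, b ≤ j → j < s → f (j+1) < f j) :
    f s ≤ f b := by
  induction s, hbs using Nat.le_induction with
  | base => exact le_refl _
  | succ s hs ih =>
    have h1 : f s ≤ f b := ih (fun j hj hjs => h j hj (by omega))
    have h2 : f (s+1) < f s := h s hs (by omega)
    linarith

lemma chain_inc (b : ℕ) (hb : 1 ≤ b) (h : ∀ j, 1 ≤ j → j + 1 ≤ b → f j ≤ f (j+1)) :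
    f 1 ≤ f b := by
  induction b, hb using Nat.le_induction with
  | base => exact le_refl _
  | succ b hb ih =>
    have h1 : f 1 ≤ f b := ih (fun j hj hjb => h j hj (by omega))
    have h2 : f b ≤ f (b+1) := h b hb (by omega)
    linarith

lemma quasiconcave_min (hstep : ∀ n, 1 ≤ n → f (n+1) < f n → f (n+2) < f (n+1))
    (s : ℕ) (hs : 1 ≤ s) (b : ℕ) (hb1 : 1 ≤ b) (hbs : b ≤ s) :
    min (f 1) (f s) ≤ f b := by
  by_cases hex : ∃ c, 1 ≤ c ∧ c + 1 ≤ b ∧ f (c+1) < f c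
  · obtain ⟨c, hc1, hcb, hcd⟩ := hex
    have hall := desc_prop f hstep c hc1 hcd
    have : f s ≤ f b := chain_dec f b s hbs (fun j hj hjs => hall j (by omega))
    exact le_trans (min_le_right _ _) this
  · push_neg at hex
    have : f 1 ≤ f b := chain_inc f b hb1 (fun j hj hjb => (hex j hj hjb))
    exact le_trans (min_le_left _ _) this

end Combinatorial

/-- For a fixed code rate `R ∈ (0,1)` and `m b` the `R`-quantile of Gamma(b,1),
the minimum of `m b / b` over `1 ≤ b ≤ s` is attained at `b = 1` or `b = s`:
the optimal batch size is either the minimum or the maximum. -/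
theorem optimal_batch_size_extreme (R : ℝ) (hR0 : 0 < R) (hR1 : R < 1)
    (m : ℕ → ℝ) (hm : ∀ b : ℕ, 1 ≤ b → 0 < m b ∧ regIncGamma b (m b) = R) :
    ∀ s : ℕ, (hs : 1 ≤ s) →
      (Finset.Icc 1 s).inf' (Finset.nonempty_Icc.mpr hs)
          (fun b => m b / (b : ℝ)) = min (m 1) (m s / (s : ℝ)) := by
  intro s hs
  set f : ℕ → ℝ := fun b => m b / (b : ℝ) with hf
  have hf1 : f 1 = m 1 := by simp [hf]
  have hstep : ∀ n, 1 ≤ n → f (n+1) < f n → f (n+2) < f (n+1) := by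
    intro n hn hdec
    have := m_step R m hm n hn (by simpa [hf] using hdec)
    simpa [hf] using this
  have h1mem : 1 ∈ Finset.Icc 1 s := Finset.mem_Icc.mpr ⟨le_refl _, hs⟩
  have hsmem : s ∈ Finset.Icc 1 s := Finset.mem_Icc.mpr ⟨hs, le_refl _⟩
  apply le_antisymm
  · apply le_min
    · rw [← hf1]; exact Finset.inf'_le _ h1mem
    · exact Finset.inf'_le _ hsmem
  · apply Finset.le_inf'
    intro b hb
    obtain ⟨hb1, hbs⟩ := Finset.mem_Icc.mp hb
    rw [← hf1]
    exact quasiconcave_min f hstep s hs b hb1 hbs
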